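/- Let c > 1, γ > 0 and x > 0 be fixed. There exists a constant C such that for all y ∈ ℝ: c·log|Γ(x + γ + iy)| − log|Γ(x + iy)| ≤ C − (c − 1)·(π/4)·|y|, where Γ denotes the complex Gamma function. -/

import Mathlib

open Complex MeasureTheory Real

noncomputable def Bconst (σ a : ℝ) : ℝ := ∫ x in (0:ℝ)..1, x ^ (σ - 1) * (1 - x) ^ (a - 1)

lemma beta_norm_le {s : ℂ} (hs : 0 < s.re) {a : ℝ} (ha : 0 < a) (ha1 : a < 1) :
    ‖Complex.betaIntegral s ↑a‖ ≤ Bconst s.re a := by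
  rw [Complex.betaIntegral, Bconst]
  refine le_trans (intervalIntegral.norm_integral_le_integral_norm (by norm_num)) (le_of_eq ?_)
  rw [intervalIntegral.integral_of_le (by norm_num : (0:ℝ) ≤ 1),
      intervalIntegral.integral_of_le (by norm_num : (0:ℝ) ≤ 1)]
  refine setIntegral_congr_fun measurableSet_Ioc (fun t ht => ?_)
  obtain ⟨ht0, ht1⟩ := ht
  rw [norm_mul]
  congr 1
  · rw [Complex.norm_cpow_eq_rpow_re_of_pos ht0, Complex.sub_re,
      Complex.one_re]
  · rcases eq_or_lt_of_le ht1 with h | h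
    · subst h
      simp only [sub_self]
      rw [Complex.ofReal_one, sub_self, Complex.zero_cpow, Real.zero_rpow (by linarith)]
      · simp
      · intro hh
        have : (↑a - 1 : ℂ).re = 0 := by rw [hh]; simp
        simp only [Complex.sub_re, Complex.ofReal_re, Complex.one_re] at this
        linarith
    · have h1 : (0:ℝ) < 1 - t := by linarith
      have : ((1:ℂ) - ↑t) = ((1 - t : ℝ) : ℂ) := by push_cast; ring
      rw [this, Complex.norm_cpow_eq_rpow_re_of_pos h1, Complex.sub_re,
        Complex.ofReal_re, Complex.one_re]


lemma Bconst_nonneg {σ a : ℝ} (hσ : 0 < σ) (ha : 0 < a) (ha1 : a < 1) : 0 ≤ Bconst σ a := by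
  have := beta_norm_le (s := (σ : ℂ)) (by simpa using hσ) ha ha1
  simp only [Complex.ofReal_re] at this
  exact le_trans (norm_nonneg _) this

lemma shift_up {s : ℂ} (hs : 0 < s.re) {a : ℝ} (ha : 0 < a) (ha1 : a < 1) :
    ‖Complex.Gamma s‖ ≤
      Bconst s.re a / Real.Gamma a * ‖Complex.Gamma (s + ↑a)‖ := by
  have hGa : 0 < Real.Gamma a := Real.Gamma_pos_of_pos ha
  have hid := Complex.Gamma_mul_Gamma_eq_betaIntegral (s := s) (t := ↑a) hs (by simpa using ha)
  have h1 : ‖Complex.Gamma s‖ * Real.Gamma a =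
      ‖Complex.Gamma (s + ↑a)‖ * ‖Complex.betaIntegral s ↑a‖ := by
    have := congrArg (‖·‖) hid
    rwa [norm_mul, norm_mul, Complex.Gamma_ofReal, Complex.norm_real, Real.norm_eq_abs,
      abs_of_pos hGa] at this
  rw [div_mul_eq_mul_div, le_div_iff₀ hGa, h1, mul_comm (Bconst _ _) _]
  exact mul_le_mul_of_nonneg_left (beta_norm_le hs ha ha1) (norm_nonneg _)

lemma shift_down {s : ℂ} (hs : 0 < s.re) {a : ℝ} (ha : 0 < a) (ha1 : a < 1) :
    ‖Complex.Gamma (s + ↑a)‖ ≤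
      Bconst (s.re + a) (1 - a) / Real.Gamma (1 - a) *
        (‖s‖ * ‖Complex.Gamma s‖) := by
  have hGa : 0 < Real.Gamma (1 - a) := Real.Gamma_pos_of_pos (by linarith)
  have hre : 0 < (s + ↑a).re := by simp; linarith
  have hid := Complex.Gamma_mul_Gamma_eq_betaIntegral (s := s + ↑a) (t := ↑(1 - a)) hre
    (by simpa using by linarith : 0 < ((↑(1-a):ℂ)).re)
  have he : s + ↑a + ↑(1 - a) = s + 1 := by push_cast; ring
  rw [he, Complex.Gamma_add_one s (fun h => by simp [h] at hs)] at hid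
  have h1 : ‖Complex.Gamma (s + ↑a)‖ * Real.Gamma (1 - a) =
      ‖s‖ * ‖Complex.Gamma s‖ *
        ‖Complex.betaIntegral (s + ↑a) ↑(1 - a)‖ := by
    have := congrArg (‖·‖) hid
    rwa [norm_mul, norm_mul, norm_mul, Complex.Gamma_ofReal, Complex.norm_real, Real.norm_eq_abs,
      abs_of_pos hGa] at this
  rw [div_mul_eq_mul_div, le_div_iff₀ hGa, h1, mul_comm (Bconst _ _) _]
  refine mul_le_mul_of_nonneg_left ?_ (by positivity)
  have hb := beta_norm_le (s := s + ↑a) hre (by linarith : (0:ℝ) < 1 - a) (by linarith)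
  simpa using hb


noncomputable def Hfun (y : ℝ) : ℝ := Real.sqrt (π / Real.cosh (π * y))

lemma Hfun_pos (y : ℝ) : 0 < Hfun y :=
  Real.sqrt_pos.mpr (div_pos Real.pi_pos (Real.cosh_pos _))

lemma abs_Gamma_half (y : ℝ) :
    ‖Complex.Gamma (1/2 + ↑y * Complex.I)‖ = Hfun y := by
  set z : ℂ := 1/2 + ↑y * Complex.I with hz
  have h1 : (1 : ℂ) - z = (starRingEnd ℂ) z := by
    rw [hz]; apply Complex.ext <;> simp <;> norm_num
  have h2 := Complex.Gamma_mul_Gamma_one_sub z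
  rw [h1, Complex.Gamma_conj, Complex.mul_conj] at h2
  have h3 : Complex.sin (↑π * z) = ↑(Real.cosh (π * y)) := by
    have : (↑π : ℂ) * z = ↑(π * y) * Complex.I + ↑π / 2 := by rw [hz]; push_cast; ring
    rw [this]
    rw [show (↑π / 2 : ℂ) = ↑(π : ℝ) / 2 by norm_num, Complex.sin_add_pi_div_two,
      Complex.cos_mul_I, Complex.ofReal_cosh]
  rw [h3] at h2
  have h4 : Complex.normSq (Complex.Gamma z) = π / Real.cosh (π * y) := by
    have h5 : ((Complex.normSq (Complex.Gamma z) : ℝ) : ℂ) = ((π / Real.cosh (π * y) : ℝ) : ℂ) := by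
      rw [h2]; push_cast; ring
    exact_mod_cast h5
  rw [Hfun, ← h4, ← Complex.sq_norm, Real.sqrt_sq (norm_nonneg _)]

lemma re_mk (σ y : ℝ) : ((↑σ : ℂ) + ↑y * Complex.I).re = σ := by simp

lemma abs_mk_le (σ y : ℝ) (h : 0 ≤ σ) (h1 : σ ≤ 1) :
    ‖(↑σ : ℂ) + ↑y * Complex.I‖ ≤ 1 + |y| := by
  refine le_trans (norm_add_le _ _) ?_
  simp only [norm_mul, Complex.norm_real, Real.norm_eq_abs, Complex.norm_I, mul_one]
  rw [_root_.abs_of_nonneg h]; linarith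

lemma abs_mk_ge (σ y : ℝ) (h : 0 ≤ σ) : σ ≤ ‖(↑σ : ℂ) + ↑y * Complex.I‖ := by
  have := Complex.abs_re_le_norm ((↑σ : ℂ) + ↑y * Complex.I)
  rw [re_mk, _root_.abs_of_nonneg h] at this
  exact this

lemma Gamma_abs_pos (σ y : ℝ) (h : 0 < σ) :
    0 < ‖Complex.Gamma ((↑σ : ℂ) + ↑y * Complex.I)‖ := by
  rw [norm_pos_iff]
  exact Complex.Gamma_ne_zero_of_re_pos (by rw [re_mk]; exact h)

lemma base_upper {σ : ℝ} (h0 : 0 < σ) (h1 : σ ≤ 1) :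
    ∃ K : ℝ, 0 < K ∧ ∀ y : ℝ,
      ‖Complex.Gamma (↑σ + ↑y * Complex.I)‖ ≤ K * (1 + |y|) * Hfun y := by
  rcases lt_trichotomy σ (1/2) with h | h | h
  · -- shift up from σ to 1/2
    set a : ℝ := 1/2 - σ with ha
    refine ⟨max (Bconst σ a / Real.Gamma a) 1, lt_of_lt_of_le one_pos (le_max_right _ _),
      fun y => ?_⟩
    have hs := shift_up (s := ↑σ + ↑y * Complex.I) (a := a) (by rw [re_mk]; exact h0)
      (by rw [ha]; linarith) (by rw [ha]; linarith)
    rw [re_mk] at hs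
    have he : (↑σ + ↑y * Complex.I) + (↑a : ℂ) = 1/2 + ↑y * Complex.I := by
      rw [ha]; push_cast; ring
    rw [he, abs_Gamma_half] at hs
    refine le_trans hs ?_
    have h2 : (1:ℝ) ≤ 1 + |y| := by simp [abs_nonneg]
    calc Bconst σ a / Real.Gamma a * Hfun y
        ≤ max (Bconst σ a / Real.Gamma a) 1 * Hfun y :=
          mul_le_mul_of_nonneg_right (le_max_left _ _) (Hfun_pos y).le
      _ ≤ max (Bconst σ a / Real.Gamma a) 1 * ((1 + |y|) * Hfun y) := by
          refine mul_le_mul_of_nonneg_left ?_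
            (le_of_lt (lt_of_lt_of_le one_pos (le_max_right _ _)))
          nlinarith [Hfun_pos y]
      _ = max (Bconst σ a / Real.Gamma a) 1 * (1 + |y|) * Hfun y := by ring
  · subst h
    refine ⟨1, one_pos, fun y => ?_⟩
    have : ((1/2 : ℝ) : ℂ) + ↑y * Complex.I = 1/2 + ↑y * Complex.I := by norm_num
    rw [this, abs_Gamma_half]
    nlinarith [Hfun_pos y, abs_nonneg y]
  · -- shift down from 1/2 to σ
    set a : ℝ := σ - 1/2 with ha
    refine ⟨max (Bconst (1/2 + a) (1 - a) / Real.Gamma (1 - a)) 1,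
      lt_of_lt_of_le one_pos (le_max_right _ _), fun y => ?_⟩
    have hs := shift_down (s := 1/2 + ↑y * Complex.I) (a := a)
      (by norm_num) (by rw [ha]; linarith) (by rw [ha]; linarith)
    have he : (1/2 + ↑y * Complex.I) + (↑a : ℂ) = ↑σ + ↑y * Complex.I := by
      rw [ha]; push_cast; ring
    have hre : ((1/2 : ℂ) + ↑y * Complex.I).re = 1/2 := by norm_num
    rw [he, hre, abs_Gamma_half] at hs
    refine le_trans hs ?_
    have habs : ‖1/2 + ↑y * Complex.I‖ ≤ 1 + |y| := by
      have := abs_mk_le (1/2) y (by norm_num) (by norm_num)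
      simpa using this
    have hB : 0 ≤ Bconst (1/2 + a) (1 - a) / Real.Gamma (1 - a) :=
      div_nonneg (Bconst_nonneg (by rw [ha]; linarith) (by rw [ha]; linarith)
        (by rw [ha]; linarith)) (Real.Gamma_pos_of_pos (by rw [ha]; linarith)).le
    calc Bconst (1/2 + a) (1 - a) / Real.Gamma (1 - a) *
          (‖1/2 + ↑y * Complex.I‖ * Hfun y)
        ≤ Bconst (1/2 + a) (1 - a) / Real.Gamma (1 - a) * ((1 + |y|) * Hfun y) := by
          refine mul_le_mul_of_nonneg_left ?_ hB
          exact mul_le_mul_of_nonneg_right habs (Hfun_pos y).le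
      _ ≤ max (Bconst (1/2 + a) (1 - a) / Real.Gamma (1 - a)) 1 * ((1 + |y|) * Hfun y) := by
          refine mul_le_mul_of_nonneg_right (le_max_left _ _) ?_
          have := Hfun_pos y; have := abs_nonneg y; nlinarith
      _ = max (Bconst (1/2 + a) (1 - a) / Real.Gamma (1 - a)) 1 * (1 + |y|) * Hfun y := by
          ring

lemma base_lower {σ : ℝ} (h0 : 0 < σ) (h1 : σ ≤ 1) :
    ∃ K : ℝ, 0 < K ∧ ∀ y : ℝ,
      Hfun y ≤ K * (1 + |y|) * ‖Complex.Gamma (↑σ + ↑y * Complex.I)‖ := by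
  rcases lt_trichotomy σ (1/2) with h | h | h
  · set a : ℝ := 1/2 - σ with ha
    refine ⟨max (Bconst (σ + a) (1 - a) / Real.Gamma (1 - a)) 1,
      lt_of_lt_of_le one_pos (le_max_right _ _), fun y => ?_⟩
    have hs := shift_down (s := ↑σ + ↑y * Complex.I) (a := a) (by rw [re_mk]; exact h0)
      (by rw [ha]; linarith) (by rw [ha]; linarith)
    have he : (↑σ + ↑y * Complex.I) + (↑a : ℂ) = 1/2 + ↑y * Complex.I := by
      rw [ha]; push_cast; ring
    rw [he, re_mk, abs_Gamma_half] at hs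
    refine le_trans hs ?_
    have habs := abs_mk_le σ y h0.le h1
    have hΓ := Gamma_abs_pos σ y h0
    have hB : 0 ≤ Bconst (σ + a) (1 - a) / Real.Gamma (1 - a) :=
      div_nonneg (Bconst_nonneg (by rw [ha]; linarith) (by rw [ha]; linarith)
        (by rw [ha]; linarith)) (Real.Gamma_pos_of_pos (by rw [ha]; linarith)).le
    calc Bconst (σ + a) (1 - a) / Real.Gamma (1 - a) *
          (‖↑σ + ↑y * Complex.I‖ * ‖Complex.Gamma (↑σ + ↑y * Complex.I)‖)
        ≤ Bconst (σ + a) (1 - a) / Real.Gamma (1 - a) *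
          ((1 + |y|) * ‖Complex.Gamma (↑σ + ↑y * Complex.I)‖) := by
          exact mul_le_mul_of_nonneg_left (mul_le_mul_of_nonneg_right habs hΓ.le) hB
      _ ≤ max (Bconst (σ + a) (1 - a) / Real.Gamma (1 - a)) 1 *
          ((1 + |y|) * ‖Complex.Gamma (↑σ + ↑y * Complex.I)‖) := by
          refine mul_le_mul_of_nonneg_right (le_max_left _ _) ?_
          have := abs_nonneg y; nlinarith
      _ = _ := by ring
  · subst h
    refine ⟨1, one_pos, fun y => ?_⟩
    have h2 : ((1/2 : ℝ) : ℂ) + ↑y * Complex.I = 1/2 + ↑y * Complex.I := by norm_num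
    rw [h2, abs_Gamma_half]
    nlinarith [Hfun_pos y, abs_nonneg y]
  · set a : ℝ := σ - 1/2 with ha
    refine ⟨max (Bconst (1/2) a / Real.Gamma a) 1,
      lt_of_lt_of_le one_pos (le_max_right _ _), fun y => ?_⟩
    have hs := shift_up (s := 1/2 + ↑y * Complex.I) (a := a) (by norm_num)
      (by rw [ha]; linarith) (by rw [ha]; linarith)
    have he : (1/2 + ↑y * Complex.I) + (↑a : ℂ) = ↑σ + ↑y * Complex.I := by
      rw [ha]; push_cast; ring
    have hre : ((1/2 : ℂ) + ↑y * Complex.I).re = 1/2 := by norm_num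
    rw [he, hre, abs_Gamma_half] at hs
    refine le_trans hs ?_
    have hΓ := Gamma_abs_pos σ y h0
    calc Bconst (1/2) a / Real.Gamma a * ‖Complex.Gamma (↑σ + ↑y * Complex.I)‖
        ≤ max (Bconst (1/2) a / Real.Gamma a) 1 *
            ‖Complex.Gamma (↑σ + ↑y * Complex.I)‖ :=
          mul_le_mul_of_nonneg_right (le_max_left _ _) hΓ.le
      _ ≤ max (Bconst (1/2) a / Real.Gamma a) 1 *
            ((1 + |y|) * ‖Complex.Gamma (↑σ + ↑y * Complex.I)‖) := by
          refine mul_le_mul_of_nonneg_left ?_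
            (le_of_lt (lt_of_lt_of_le one_pos (le_max_right _ _)))
          nlinarith [abs_nonneg y]
      _ = _ := by ring

lemma gen_upper_aux : ∀ n : ℕ, ∀ σ : ℝ, 0 < σ → σ ≤ n + 1 →
    ∃ (K : ℝ) (m : ℕ), 0 < K ∧ ∀ y : ℝ,
      ‖Complex.Gamma (↑σ + ↑y * Complex.I)‖ ≤ K * (1 + |y|)^m * Hfun y := by
  intro n
  induction n with
  | zero =>
    intro σ h0 h1
    obtain ⟨K, hK, hb⟩ := base_upper h0 (by norm_num at h1; exact h1)
    exact ⟨K, 1, hK, fun y => by simpa using hb y⟩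
  | succ n ih =>
    intro σ h0 h1
    rcases le_or_gt σ 1 with h | h
    · obtain ⟨K, hK, hb⟩ := base_upper h0 h
      exact ⟨K, 1, hK, fun y => by simpa using hb y⟩
    · obtain ⟨K, m, hK, hb⟩ := ih (σ - 1) (by linarith) (by push_cast at h1 ⊢; linarith)
      refine ⟨(σ + 1) * K, m + 1, by positivity, fun y => ?_⟩
      have hne : ((↑(σ-1) : ℂ) + ↑y * Complex.I) ≠ 0 := by
        intro hh
        have := congrArg Complex.re hh
        rw [re_mk] at this
        simp at this; linarith
      have hfe : Complex.Gamma (↑σ + ↑y * Complex.I) =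
          ((↑(σ-1) : ℂ) + ↑y * Complex.I) * Complex.Gamma ((↑(σ-1) : ℂ) + ↑y * Complex.I) := by
        rw [← Complex.Gamma_add_one _ hne]
        congr 1
        push_cast; ring
      rw [hfe, norm_mul]
      have habs : ‖(↑(σ-1) : ℂ) + ↑y * Complex.I‖ ≤ (σ + 1) * (1 + |y|) := by
        refine le_trans (norm_add_le _ _) ?_
        simp only [norm_mul, Complex.norm_real, Real.norm_eq_abs, Complex.norm_I, mul_one]
        rw [_root_.abs_of_nonneg (by linarith : (0:ℝ) ≤ σ - 1)]
        nlinarith [abs_nonneg y]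
      calc ‖(↑(σ-1) : ℂ) + ↑y * Complex.I‖ *
            ‖Complex.Gamma ((↑(σ-1) : ℂ) + ↑y * Complex.I)‖
          ≤ ((σ + 1) * (1 + |y|)) * (K * (1 + |y|)^m * Hfun y) := by
            refine mul_le_mul habs (hb y) (norm_nonneg _) ?_
            positivity
        _ = (σ + 1) * K * (1 + |y|)^(m+1) * Hfun y := by ring

lemma gen_lower_aux : ∀ n : ℕ, ∀ σ : ℝ, 0 < σ → σ ≤ n + 1 →
    ∃ K : ℝ, 0 < K ∧ ∀ y : ℝ,
      Hfun y ≤ K * (1 + |y|) * ‖Complex.Gamma (↑σ + ↑y * Complex.I)‖ := by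
  intro n
  induction n with
  | zero =>
    intro σ h0 h1
    exact base_lower h0 (by norm_num at h1; exact h1)
  | succ n ih =>
    intro σ h0 h1
    rcases le_or_gt σ 1 with h | h
    · exact base_lower h0 h
    · obtain ⟨K, hK, hb⟩ := ih (σ - 1) (by linarith) (by push_cast at h1 ⊢; linarith)
      refine ⟨K / (σ - 1), div_pos hK (by linarith), fun y => ?_⟩
      have hne : ((↑(σ-1) : ℂ) + ↑y * Complex.I) ≠ 0 := by
        intro hh
        have := congrArg Complex.re hh
        rw [re_mk] at this
        simp at this; linarith
      have hfe : Complex.Gamma (↑σ + ↑y * Complex.I) =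
          ((↑(σ-1) : ℂ) + ↑y * Complex.I) * Complex.Gamma ((↑(σ-1) : ℂ) + ↑y * Complex.I) := by
        rw [← Complex.Gamma_add_one _ hne]
        congr 1
        push_cast; ring
      have hge : σ - 1 ≤ ‖(↑(σ-1) : ℂ) + ↑y * Complex.I‖ :=
        abs_mk_ge (σ-1) y (by linarith)
      have hΓ := Gamma_abs_pos (σ-1) y (by linarith)
      refine le_trans (hb y) ?_
      rw [hfe, norm_mul]
      rw [div_mul_eq_mul_div, div_mul_eq_mul_div, le_div_iff₀ (by linarith : (0:ℝ) < σ - 1)]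
      calc K * (1 + |y|) * ‖Complex.Gamma ((↑(σ-1) : ℂ) + ↑y * Complex.I)‖ * (σ - 1)
          = K * (1 + |y|) * ((σ-1) * ‖Complex.Gamma ((↑(σ-1) : ℂ) + ↑y * Complex.I)‖)
            := by ring
        _ ≤ K * (1 + |y|) * (‖(↑(σ-1) : ℂ) + ↑y * Complex.I‖ *
              ‖Complex.Gamma ((↑(σ-1) : ℂ) + ↑y * Complex.I)‖) := by
            exact mul_le_mul_of_nonneg_left (mul_le_mul_of_nonneg_right hge hΓ.le)
              (mul_nonneg hK.le (by positivity))

lemma sqrt_exp_eq (t : ℝ) : Real.sqrt (Real.exp t) = Real.exp (t/2) := by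
  rw [show Real.exp t = (Real.exp (t/2))^2 by rw [sq, ← Real.exp_add]; ring_nf]
  exact Real.sqrt_sq (Real.exp_pos _).le

lemma Hfun_le (y : ℝ) : Hfun y ≤ Real.sqrt (2*π) * Real.exp (-(π/2) * |y|) := by
  have hcosh : Real.exp (π * |y|) / 2 ≤ Real.cosh (π * y) := by
    have h1 := Real.exp_abs_le (π * y)
    rw [Real.cosh_eq]
    rw [abs_mul, _root_.abs_of_pos Real.pi_pos] at h1
    linarith
  have h2 : π / Real.cosh (π * y) ≤ 2 * π * Real.exp (-(π * |y|)) := by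
    rw [div_le_iff₀ (Real.cosh_pos _)]
    have h3 : 2 * π * Real.exp (-(π * |y|)) * (Real.exp (π * |y|) / 2) ≤
        2 * π * Real.exp (-(π * |y|)) * Real.cosh (π * y) := by
      refine mul_le_mul_of_nonneg_left hcosh ?_
      positivity
    refine le_trans (le_of_eq ?_) h3
    have : Real.exp (-(π * |y|)) * Real.exp (π * |y|) = 1 := by
      rw [← Real.exp_add]; simp
    linear_combination (-π) * this
  refine le_trans (Real.sqrt_le_sqrt h2) (le_of_eq ?_)
  rw [Real.sqrt_mul (by positivity), sqrt_exp_eq]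
  ring_nf

lemma Hfun_ge (y : ℝ) : Real.sqrt π * Real.exp (-(π/2) * |y|) ≤ Hfun y := by
  have hcosh : Real.cosh (π * y) ≤ Real.exp (π * |y|) := by
    rw [Real.cosh_eq]
    have h1 : π * y ≤ π * |y| := by
      have := le_abs_self (π * y)
      rwa [abs_mul, _root_.abs_of_pos Real.pi_pos] at this
    have h2 : -(π * y) ≤ π * |y| := by
      have := neg_abs_le (π * y)
      rw [abs_mul, _root_.abs_of_pos Real.pi_pos] at this
      linarith
    have := Real.exp_le_exp.mpr h1
    have := Real.exp_le_exp.mpr h2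
    linarith [Real.exp_le_exp.mpr h1, Real.exp_le_exp.mpr h2]
  have h2 : π * Real.exp (-(π * |y|)) ≤ π / Real.cosh (π * y) := by
    rw [le_div_iff₀ (Real.cosh_pos _)]
    have h3 : π * Real.exp (-(π * |y|)) * Real.cosh (π * y) ≤
        π * Real.exp (-(π * |y|)) * Real.exp (π * |y|) :=
      mul_le_mul_of_nonneg_left hcosh (by positivity)
    refine le_trans h3 (le_of_eq ?_)
    rw [mul_assoc, ← Real.exp_add]
    simp
  refine le_trans (le_of_eq ?_) (Real.sqrt_le_sqrt h2)
  rw [Real.sqrt_mul Real.pi_pos.le, sqrt_exp_eq]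
  ring_nf

lemma absorb {M ε : ℝ} (hM : 0 < M) (hε : 0 < ε) :
    ∃ C : ℝ, ∀ t : ℝ, 0 ≤ t → M * Real.log (1 + t) ≤ C + ε * t := by
  refine ⟨M^2/ε + ε, fun t ht => ?_⟩
  set u := Real.sqrt (1 + t) with hu
  have hu1 : 1 ≤ u := by
    rw [hu]
    nlinarith [Real.sq_sqrt (by linarith : (0:ℝ) ≤ 1 + t),
      Real.sqrt_nonneg (1+t)]
  have hu2 : u^2 = 1 + t := Real.sq_sqrt (by linarith)
  have hlog : Real.log (1 + t) = 2 * Real.log u := by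
    rw [← hu2, Real.log_pow]; norm_num
  have hlu : Real.log u ≤ u - 1 := Real.log_le_sub_one_of_pos (by linarith)
  have hkey : ε * (M^2/ε) = M^2 := by field_simp
  rw [hlog]
  have h5 : 2*M*Real.log u ≤ 2*M*(u-1) :=
    mul_le_mul_of_nonneg_left hlu (by linarith : (0:ℝ) ≤ 2*M)
  have h6 : ε*u^2 = ε + ε*t := by linear_combination ε * hu2
  have hexp : (ε*u - M)^2/ε = ε*u^2 - 2*M*u + M^2/ε := by field_simp; ring
  have h7 : 0 ≤ (ε*u - M)^2/ε := div_nonneg (sq_nonneg _) hε.le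
  linarith

/-- For fixed `c > 1`, `γ > 0`, `x > 0`, there is a constant `C` such that for all `y ∈ ℝ`,
`c·log|Γ(x + γ + iy)| - log|Γ(x + iy)| ≤ C - (c-1)(π/4)|y|`. -/
theorem gamma_modulus_decay_bound (c γ x : ℝ) (hc : 1 < c) (hγ : 0 < γ) (hx : 0 < x) :
    ∃ C : ℝ, ∀ y : ℝ,
      c * Real.log (‖Complex.Gamma (↑x + ↑γ + ↑y * Complex.I)‖)
          - Real.log (‖Complex.Gamma (↑x + ↑y * Complex.I)‖)
        ≤ C - (c - 1) * (Real.pi / 4) * |y| := by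
  have hσ1 : (0:ℝ) < x + γ := by linarith
  obtain ⟨K₁, m, hK₁, hU⟩ := gen_upper_aux ⌈x + γ⌉₊ (x + γ) hσ1
    (le_trans (Nat.le_ceil _) (by push_cast; linarith))
  obtain ⟨K₂, hK₂, hL⟩ := gen_lower_aux ⌈x⌉₊ x hx
    (le_trans (Nat.le_ceil _) (by push_cast; linarith))
  obtain ⟨C₀, hC₀⟩ := absorb (M := c * m + 1) (by positivity)
    (show (0:ℝ) < (c - 1) * (π/4) by have := Real.pi_pos; nlinarith)
  refine ⟨c * Real.log K₁ + Real.log K₂ + (c - 1) * Real.log (Real.sqrt (2*π)) + C₀,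
    fun y => ?_⟩
  set L : ℝ := Real.log (1 + |y|) with hLdef
  have hLpos : 0 ≤ L := Real.log_nonneg (by simp [abs_nonneg])
  have hcast : ((↑(x+γ) : ℂ) + ↑y * Complex.I) = ↑x + ↑γ + ↑y * Complex.I := by
    push_cast; ring
  -- upper bound for log A
  have hA := Gamma_abs_pos (x + γ) y hσ1
  have l1 : Real.log (‖Complex.Gamma (↑x + ↑γ + ↑y * Complex.I)‖) ≤
      Real.log K₁ + (m : ℝ) * L + Real.log (Hfun y) := by
    rw [← hcast]
    refine le_trans (Real.log_le_log hA (hU y)) (le_of_eq ?_)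
    rw [Real.log_mul (by positivity) (Hfun_pos y).ne',
      Real.log_mul hK₁.ne' (by positivity), Real.log_pow]
  -- lower bound for log B
  have hB := Gamma_abs_pos x y hx
  have l2 : Real.log (Hfun y) ≤ Real.log K₂ + L +
      Real.log (‖Complex.Gamma (↑x + ↑y * Complex.I)‖) := by
    refine le_trans (Real.log_le_log (Hfun_pos y) (hL y)) (le_of_eq ?_)
    rw [Real.log_mul (by positivity) hB.ne',
      Real.log_mul hK₂.ne' (by positivity)]
  -- upper bound for log H
  have l3 : Real.log (Hfun y) ≤ Real.log (Real.sqrt (2*π)) - (π/2) * |y| := by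
    refine le_trans (Real.log_le_log (Hfun_pos y) (Hfun_le y)) (le_of_eq ?_)
    rw [Real.log_mul (by positivity) (Real.exp_pos _).ne', Real.log_exp]
    ring
  have l4 := hC₀ |y| (abs_nonneg y)
  rw [← hLdef] at l4
  have l1' : c * Real.log (‖Complex.Gamma (↑x + ↑γ + ↑y * Complex.I)‖) ≤
      c * (Real.log K₁ + (m : ℝ) * L + Real.log (Hfun y)) :=
    mul_le_mul_of_nonneg_left l1 (by linarith)
  have l3' : (c - 1) * Real.log (Hfun y) ≤
      (c - 1) * (Real.log (Real.sqrt (2*π)) - (π/2) * |y|) :=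
    mul_le_mul_of_nonneg_left l3 (by linarith)
  nlinarith [l1', l2, l3', l4]
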